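/- Let Ω ⊂ ℝ² be a bounded measurable set with |Ω| > 0 and let Λ be a spectrum of Ω contained in a lattice L ⊂ ℝ². Then the covolume of L is at most 1/|Ω|. -/

import Mathlib

open MeasureTheory Real Complex
open scoped RealInnerProductSpace

/-- The Fourier transform of the indicator function of `Ω` at frequency `ξ`:
`∫_Ω e^{-2πi ξ·x} dx`. -/
noncomputable def fourierInd {d : ℕ} (Ω : Set (EuclideanSpace ℝ (Fin d)))
    (ξ : EuclideanSpace ℝ (Fin d)) : ℂ :=
  ∫ x in Ω, Complex.exp (-(2 * Real.pi * Complex.I * ((⟪ξ, x⟫ : ℝ) : ℂ)))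

/-- `Λ` is a spectrum of `Ω`: the exponentials `e^{2πi x·λ}`, `λ ∈ Λ`, are pairwise
orthogonal in `L²(Ω)` and their span is complete (any `L²(Ω)` function orthogonal to
all of them vanishes a.e.). -/
def IsSpectrum {d : ℕ} (Ω Λ : Set (EuclideanSpace ℝ (Fin d))) : Prop :=
  (∀ lam ∈ Λ, ∀ mu ∈ Λ, lam ≠ mu →
    ∫ x in Ω, Complex.exp (2 * Real.pi * Complex.I * ((⟪x, lam⟫ : ℝ) : ℂ)) *
      (starRingEnd ℂ) (Complex.exp (2 * Real.pi * Complex.I * ((⟪x, mu⟫ : ℝ) : ℂ))) = 0) ∧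
  (∀ f : EuclideanSpace ℝ (Fin d) → ℂ, MemLp f 2 (volume.restrict Ω) →
    (∀ lam ∈ Λ, ∫ x in Ω,
      f x * (starRingEnd ℂ) (Complex.exp (2 * Real.pi * Complex.I * ((⟪x, lam⟫ : ℝ) : ℂ))) = 0) →
    f =ᵐ[volume.restrict Ω] 0)

open scoped Pointwise

noncomputable def zmap (w : Fin 2 → ℤ) : EuclideanSpace ℝ (Fin 2) := WithLp.toLp 2 (fun i => (w i : ℝ))

def Icube : Set (EuclideanSpace ℝ (Fin 2)) := {v | ∀ i, v i ∈ Set.Ico (0:ℝ) 1}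

lemma measurableSet_Icube : MeasurableSet Icube := by
  have : Icube = ⋂ i, (fun v : EuclideanSpace ℝ (Fin 2) => v i) ⁻¹' Set.Ico (0:ℝ) 1 := by
    ext v; simp [Icube]
  rw [this]
  exact MeasurableSet.iInter fun i =>
    ((EuclideanSpace.proj i : EuclideanSpace ℝ (Fin 2) →L[ℝ] ℝ).continuous.measurable)
      measurableSet_Ico

lemma volume_Icube : volume Icube = 1 := by
  have h := (EuclideanSpace.volume_preserving_symm_measurableEquiv_toLp (Fin 2)).measure_preimage
    (s := Set.univ.pi fun _ : Fin 2 => Set.Ico (0:ℝ) 1) ?_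
  · have : ((MeasurableEquiv.toLp 2 (Fin 2 → ℝ)).symm) ⁻¹' (Set.univ.pi fun _ => Set.Ico (0:ℝ) 1)
        = Icube := by
      ext v; simp [Icube, MeasurableEquiv.toLp]; exact Iff.rfl
    rw [this] at h
    rw [h]
    simp [volume_pi_pi]
  · exact (MeasurableSet.univ_pi fun _ => measurableSet_Ico).nullMeasurableSet

lemma bounded_Icube : Bornology.IsBounded Icube := by
  have : Icube ⊆ Metric.closedBall 0 2 := by
    intro v hv
    simp only [Metric.mem_closedBall, dist_zero_right]
    rw [EuclideanSpace.norm_eq]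
    have : ∀ i, |v i| ≤ 1 := fun i => by
      have := hv i; rw [Set.mem_Ico] at this; rw [abs_le]; constructor <;> nlinarith [this.1, this.2]
    have hsum : (∑ i : Fin 2, ‖v i‖ ^ 2) ≤ ∑ _i : Fin 2, (1:ℝ)^2 := by
      refine Finset.sum_le_sum fun i _ => ?_
      have h1 := this i
      have : ‖v i‖^2 = |v i|^2 := by rw [Real.norm_eq_abs]
      nlinarith [abs_nonneg (v i)]
    refine (Real.sqrt_le_sqrt hsum).trans ?_
    rw [show ∑ _i : Fin 2, (1:ℝ)^2 = 2 by simp]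
    nlinarith [Real.sq_sqrt (by norm_num : (2:ℝ) ≥ 0), Real.sqrt_nonneg 2]
  exact Metric.isBounded_closedBall.subset this

lemma zmap_apply (w : Fin 2 → ℤ) (i : Fin 2) : zmap w i = (w i : ℝ) := rfl

lemma floor_exists_unique (y : EuclideanSpace ℝ (Fin 2)) :
    ∃! w : Fin 2 → ℤ, y - zmap w ∈ Icube := by
  refine ⟨fun i => ⌊y i⌋, ?_, ?_⟩
  · intro i
    have h1 : (y - zmap fun i => ⌊y i⌋) i = y i - (⌊y i⌋ : ℝ) := by
      rw [PiLp.sub_apply]; rfl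
    rw [h1]
    exact ⟨by linarith [Int.floor_le (y i)], by linarith [Int.lt_floor_add_one (y i)]⟩
  · intro w hw
    funext i
    have h := hw i
    have h1 : (y - zmap w) i = y i - (w i : ℝ) := by rw [PiLp.sub_apply]; rfl
    rw [h1, Set.mem_Ico] at h
    have : ⌊y i⌋ = w i := Int.floor_eq_iff.mpr ⟨by linarith [h.1], by push_cast; linarith [h.2]⟩
    exact this.symm

lemma coord_le_norm (v : EuclideanSpace ℝ (Fin 2)) (i : Fin 2) : |v i| ≤ ‖v‖ := by
  have := EuclideanSpace.norm_eq v
  rw [this]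
  have h1 : ‖v i‖^2 ≤ ∑ j : Fin 2, ‖v j‖^2 :=
    Finset.single_le_sum (fun j _ => sq_nonneg ‖v j‖) (Finset.mem_univ i)
  calc |v i| = ‖v i‖ := (Real.norm_eq_abs _).symm
  _ = Real.sqrt (‖v i‖^2) := (Real.sqrt_sq (norm_nonneg _)).symm
  _ ≤ _ := Real.sqrt_le_sqrt h1

lemma finite_lattice_in_bounded {B : Set (EuclideanSpace ℝ (Fin 2))}
    (hB : Bornology.IsBounded B) : {w : Fin 2 → ℤ | zmap w ∈ B}.Finite := by
  obtain ⟨r, hr⟩ := hB.subset_closedBall 0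
  have : {w : Fin 2 → ℤ | zmap w ∈ B} ⊆ Set.univ.pi fun _ : Fin 2 => Set.Icc ⌈-r⌉ ⌊r⌋ := by
    intro w hw
    have hnorm : ‖zmap w‖ ≤ r := by
      have := hr hw; simpa [dist_zero_right] using this
    intro i _
    have := (coord_le_norm (zmap w) i).trans hnorm
    rw [zmap_apply] at this
    rw [abs_le] at this
    constructor
    · exact_mod_cast Int.ceil_le.mpr (by exact_mod_cast by linarith [this.1] : (-r : ℝ) ≤ (w i : ℝ))
    · exact Int.le_floor.mpr this.2
  exact Set.Finite.subset (Set.Finite.pi fun i => Set.finite_Icc _ _) this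

section S
variable (T : EuclideanSpace ℝ (Fin 2) ≃ₗ[ℝ] EuclideanSpace ℝ (Fin 2))

noncomputable def Slin : EuclideanSpace ℝ (Fin 2) →ₗ[ℝ] EuclideanSpace ℝ (Fin 2) :=
  LinearMap.adjoint (T.symm : EuclideanSpace ℝ (Fin 2) →ₗ[ℝ] EuclideanSpace ℝ (Fin 2))

lemma Slin_inner (v w : EuclideanSpace ℝ (Fin 2)) : ⟪T v, Slin T w⟫ = ⟪v, w⟫ := by
  rw [Slin, LinearMap.adjoint_inner_right]
  simp

lemma det_Slin : LinearMap.det (Slin T) =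
    (LinearMap.det (T : EuclideanSpace ℝ (Fin 2) →ₗ[ℝ] EuclideanSpace ℝ (Fin 2)))⁻¹ := by
  have b := EuclideanSpace.basisFun (Fin 2) ℝ
  have h1 : LinearMap.det (Slin T) = LinearMap.det
      ((T.symm : EuclideanSpace ℝ (Fin 2) →ₗ[ℝ] EuclideanSpace ℝ (Fin 2))) := by
    rw [Slin]
    rw [← LinearMap.det_toMatrix (EuclideanSpace.basisFun (Fin 2) ℝ).toBasis,
      ← LinearMap.det_toMatrix (EuclideanSpace.basisFun (Fin 2) ℝ).toBasis
        (T.symm : EuclideanSpace ℝ (Fin 2) →ₗ[ℝ] EuclideanSpace ℝ (Fin 2))]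
    rw [LinearMap.toMatrix_adjoint]
    rw [Matrix.det_conjTranspose]
    simp
  rw [h1]
  have h2 : LinearMap.det ((T.symm : EuclideanSpace ℝ (Fin 2) →ₗ[ℝ] EuclideanSpace ℝ (Fin 2))) *
      LinearMap.det ((T : EuclideanSpace ℝ (Fin 2) →ₗ[ℝ] EuclideanSpace ℝ (Fin 2))) = 1 := by
    rw [← LinearMap.det_comp]
    simp [LinearEquiv.comp_coe]
  exact eq_inv_of_mul_eq_one_left h2

lemma det_T_ne_zero :
    LinearMap.det ((T : EuclideanSpace ℝ (Fin 2) →ₗ[ℝ] EuclideanSpace ℝ (Fin 2))) ≠ 0 :=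
  LinearEquiv.isUnit_det' T |>.ne_zero

lemma det_Slin_ne_zero : LinearMap.det (Slin T) ≠ 0 := by
  rw [det_Slin]
  exact inv_ne_zero (det_T_ne_zero T)

noncomputable def Sequiv : EuclideanSpace ℝ (Fin 2) ≃ₗ[ℝ] EuclideanSpace ℝ (Fin 2) :=
  (Slin T).equivOfDetNeZero (det_Slin_ne_zero T)

lemma Sequiv_apply (x : EuclideanSpace ℝ (Fin 2)) : Sequiv T x = Slin T x := rfl

end S

section Tiles
variable (T : EuclideanSpace ℝ (Fin 2) ≃ₗ[ℝ] EuclideanSpace ℝ (Fin 2))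

noncomputable def Dfund : Set (EuclideanSpace ℝ (Fin 2)) := Slin T '' Icube

noncomputable def cvec (w : Fin 2 → ℤ) : EuclideanSpace ℝ (Fin 2) := Slin T (zmap w)

noncomputable def tile (w : Fin 2 → ℤ) : Set (EuclideanSpace ℝ (Fin 2)) :=
  (fun x => x - cvec T w) ⁻¹' Dfund T

lemma measurableSet_Dfund : MeasurableSet (Dfund T) := by
  have : Dfund T = (Sequiv T).symm ⁻¹' Icube := by
    ext x
    constructor
    · rintro ⟨u, hu, rfl⟩
      simpa [Set.mem_preimage, ← Sequiv_apply] using hu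
    · intro hx
      exact ⟨(Sequiv T).symm x, hx, by rw [← Sequiv_apply]; simp⟩
  rw [this]
  have hcont : Continuous ((Sequiv T).symm : EuclideanSpace ℝ (Fin 2) →
      EuclideanSpace ℝ (Fin 2)) := by
    exact LinearMap.continuous_of_finiteDimensional _
  exact measurableSet_Icube.preimage hcont.measurable

lemma measurableSet_tile (w : Fin 2 → ℤ) : MeasurableSet (tile T w) := by
  exact (measurableSet_Dfund T).preimage (measurable_id.sub_const _)

lemma volume_Dfund : volume (Dfund T) = ENNReal.ofReal |LinearMap.det
    ((T : EuclideanSpace ℝ (Fin 2) →ₗ[ℝ] EuclideanSpace ℝ (Fin 2)))|⁻¹ := by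
  rw [Dfund, MeasureTheory.Measure.addHaar_image_linearMap, volume_Icube, det_Slin, abs_inv]
  ring_nf

lemma volume_tile (w : Fin 2 → ℤ) : volume (tile T w) = volume (Dfund T) := by
  rw [tile]
  simp_rw [sub_eq_add_neg]
  exact measure_preimage_add_right volume (-cvec T w) (Dfund T)

lemma mem_tile_iff (y : EuclideanSpace ℝ (Fin 2)) (w : Fin 2 → ℤ) :
    y ∈ tile T w ↔ (Sequiv T).symm y - zmap w ∈ Icube := by
  rw [tile, Set.mem_preimage, Dfund]
  constructor
  · rintro ⟨u, hu, h⟩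
    have : u = (Sequiv T).symm y - zmap w := by
      apply (Sequiv T).injective
      rw [← Sequiv_apply] at h
      simp only [map_sub, LinearEquiv.apply_symm_apply]
      rw [h, Sequiv_apply, cvec]
    rwa [← this]
  · intro h
    refine ⟨(Sequiv T).symm y - zmap w, h, ?_⟩
    rw [← Sequiv_apply, map_sub, LinearEquiv.apply_symm_apply, Sequiv_apply, cvec]

lemma tile_cover (y : EuclideanSpace ℝ (Fin 2)) : ∃! w : Fin 2 → ℤ, y ∈ tile T w := by
  obtain ⟨w, hw, hu⟩ := floor_exists_unique ((Sequiv T).symm y)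
  exact ⟨w, (mem_tile_iff T y w).mpr hw, fun w' hw' => hu w' ((mem_tile_iff T y w').mp hw')⟩

lemma tile_disjoint {w w' : Fin 2 → ℤ} (h : w ≠ w') : Disjoint (tile T w) (tile T w') := by
  rw [Set.disjoint_left]
  intro y hy hy'
  obtain ⟨u, _, hu⟩ := tile_cover T y
  exact h ((hu w hy).trans (hu w' hy').symm)

end Tiles

theorem spectrum_in_lattice_covolume_bound
    (Ω : Set (EuclideanSpace ℝ (Fin 2)))
    (hΩmeas : MeasurableSet Ω) (hΩbdd : Bornology.IsBounded Ω)
    (hΩpos : 0 < volume Ω)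
    (T : EuclideanSpace ℝ (Fin 2) ≃ₗ[ℝ] EuclideanSpace ℝ (Fin 2))
    (Λ : Set (EuclideanSpace ℝ (Fin 2))) (hΛ : IsSpectrum Ω Λ)
    (hΛL : Λ ⊆ T '' {v : EuclideanSpace ℝ (Fin 2) | ∀ i, ∃ m : ℤ, v i = (m : ℝ)}) :
    |LinearMap.det (T : EuclideanSpace ℝ (Fin 2) →ₗ[ℝ] EuclideanSpace ℝ (Fin 2))| ≤
      1 / (volume Ω).toReal := by
  classical
  have hdet := det_T_ne_zero T
  have hΩfin : volume Ω ≠ ⊤ := hΩbdd.measure_lt_top.ne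
  by_contra hcon
  push_neg at hcon
  have hvolpos : 0 < (volume Ω).toReal := ENNReal.toReal_pos hΩpos.ne' hΩfin
  have habs : 0 < |LinearMap.det
      ((T : EuclideanSpace ℝ (Fin 2) →ₗ[ℝ] EuclideanSpace ℝ (Fin 2)))| := abs_pos.mpr hdet
  -- the fundamental domain has measure strictly smaller than Ω
  have hDlt : volume (Dfund T) < volume Ω := by
    rw [volume_Dfund]
    have h1 : |LinearMap.det
        ((T : EuclideanSpace ℝ (Fin 2) →ₗ[ℝ] EuclideanSpace ℝ (Fin 2)))|⁻¹
        < (volume Ω).toReal := by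
      rw [div_lt_iff₀ hvolpos] at hcon
      rw [← one_div, div_lt_iff₀ habs]
      nlinarith
    calc ENNReal.ofReal (|LinearMap.det
        ((T : EuclideanSpace ℝ (Fin 2) →ₗ[ℝ] EuclideanSpace ℝ (Fin 2)))|)⁻¹
        < ENNReal.ofReal ((volume Ω).toReal) := (ENNReal.ofReal_lt_ofReal_iff hvolpos).mpr h1
      _ = volume Ω := ENNReal.ofReal_toReal hΩfin
  -- finitely many tiles meet Ω
  set K := {w : Fin 2 → ℤ | (Ω ∩ tile T w).Nonempty} with hK
  have hKfin : K.Finite := by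
    set Sclm : EuclideanSpace ℝ (Fin 2) →L[ℝ] EuclideanSpace ℝ (Fin 2) :=
      LinearMap.toContinuousLinearMap
        ((Sequiv T).symm : EuclideanSpace ℝ (Fin 2) →ₗ[ℝ] EuclideanSpace ℝ (Fin 2)) with hSclm
    have hSclm_apply : ∀ x, Sclm x = (Sequiv T).symm x := fun x => rfl
    have hBnd : Bornology.IsBounded ((fun x => (Sequiv T).symm x) '' Ω - Icube) := by
      refine Bornology.IsBounded.sub ?_ bounded_Icube
      have h1 := Sclm.lipschitz.isBounded_image hΩbdd
      have h2 : Sclm '' Ω = (fun x => (Sequiv T).symm x) '' Ω := by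
        refine Set.image_congr fun x _ => hSclm_apply x
      rwa [h2] at h1
    refine (finite_lattice_in_bounded hBnd).subset ?_
    rintro w ⟨y, hyΩ, hyt⟩
    rw [mem_tile_iff] at hyt
    refine Set.mem_sub.mpr ⟨(Sequiv T).symm y, Set.mem_image_of_mem _ hyΩ,
      (Sequiv T).symm y - zmap w, hyt, by abel⟩
  set W := hKfin.toFinset with hW
  -- decomposition of Ω
  have hΩdecomp : Ω = ⋃ w ∈ W, Ω ∩ tile T w := by
    ext y
    constructor
    · intro hy
      obtain ⟨w, hw, -⟩ := tile_cover T y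
      have hwW : w ∈ W := by
        rw [hW, Set.Finite.mem_toFinset]
        exact ⟨y, hy, hw⟩
      exact Set.mem_biUnion hwW ⟨hy, hw⟩
    · intro hy
      simp only [Set.mem_iUnion] at hy
      obtain ⟨w, -, hy, -⟩ := hy
      exact hy
  have hsum : ∑ w ∈ W, volume (Ω ∩ tile T w) = volume Ω := by
    conv_rhs => rw [hΩdecomp]
    refine (measure_biUnion_finset ?_ ?_).symm
    · intro w hw w' hw' hne
      exact (tile_disjoint T hne).mono Set.inter_subset_right Set.inter_subset_right
    · exact fun w _ => hΩmeas.inter (measurableSet_tile T w)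
  -- translated pieces inside the fundamental domain
  set Op : (Fin 2 → ℤ) → Set (EuclideanSpace ℝ (Fin 2)) :=
    fun w => (fun x => x + cvec T w) ⁻¹' Ω ∩ Dfund T with hOp
  have hOpmeas : ∀ w, MeasurableSet (Op w) := fun w =>
    (hΩmeas.preimage (measurable_id.add_const _)).inter (measurableSet_Dfund T)
  have hOpsub : ∀ w, Op w ⊆ Dfund T := fun w => Set.inter_subset_right
  have hOpvol : ∀ w, volume (Op w) = volume (Ω ∩ tile T w) := by
    intro w
    have he : Op w = (fun x => x + cvec T w) ⁻¹' (Ω ∩ tile T w) := by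
      ext x
      simp only [hOp, Set.mem_inter_iff, Set.mem_preimage, tile, add_sub_cancel_right]
    rw [he]
    exact measure_preimage_add_right volume (cvec T w) (Ω ∩ tile T w)
  have hgt : volume (Dfund T) < ∑ w ∈ W, volume (Op w) := by
    calc volume (Dfund T) < volume Ω := hDlt
      _ = ∑ w ∈ W, volume (Ω ∩ tile T w) := hsum.symm
      _ = ∑ w ∈ W, volume (Op w) := by
          exact Finset.sum_congr rfl fun w _ => (hOpvol w).symm
  -- pigeonhole: two pieces overlap
  have hpair : ∃ w ∈ W, ∃ w' ∈ W, w ≠ w' ∧ volume (Op w ∩ Op w') ≠ 0 := by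
    by_contra hno
    push_neg at hno
    have hae : (↑W : Set (Fin 2 → ℤ)).Pairwise (Function.onFun (MeasureTheory.AEDisjoint volume) Op) := by
      intro w hw w' hw' hne
      exact hno w (Finset.mem_coe.mp hw) w' (Finset.mem_coe.mp hw') hne
    have h1 : volume (⋃ w ∈ W, Op w) = ∑ w ∈ W, volume (Op w) :=
      measure_biUnion_finset₀ hae fun w _ => (hOpmeas w).nullMeasurableSet
    have h2 : volume (⋃ w ∈ W, Op w) ≤ volume (Dfund T) := by
      refine measure_mono ?_
      intro x hx
      simp only [Set.mem_iUnion] at hx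
      obtain ⟨w, -, hx⟩ := hx
      exact hOpsub w hx
    rw [h1] at h2
    exact absurd h2 (not_le.mpr hgt)
  obtain ⟨w, hwW, w', hw'W, hne, hFpos⟩ := hpair
  set F := Op w ∩ Op w' with hF
  have hFmeas : MeasurableSet F := (hOpmeas w).inter (hOpmeas w')
  set A := (fun x => x + cvec T w) '' F with hA
  set B := (fun x => x + cvec T w') '' F with hB
  have himg : ∀ (c : EuclideanSpace ℝ (Fin 2)) (s : Set (EuclideanSpace ℝ (Fin 2))),
      (fun x => x + c) '' s = (fun x => x - c) ⁻¹' s := by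
    intro c s
    ext x
    simp only [Set.mem_image, Set.mem_preimage]
    constructor
    · rintro ⟨y, hy, rfl⟩; simpa using hy
    · intro h; exact ⟨x - c, h, by abel⟩
  have hAmeas : MeasurableSet A := by
    rw [hA, himg]; exact hFmeas.preimage (measurable_id.sub_const _)
  have hBmeas : MeasurableSet B := by
    rw [hB, himg]; exact hFmeas.preimage (measurable_id.sub_const _)
  have hAvol : volume A = volume F := by
    rw [hA, himg]
    simp_rw [sub_eq_add_neg]
    exact measure_preimage_add_right volume _ _
  have hAsubΩ : A ⊆ Ω := by
    rintro _ ⟨x, hx, rfl⟩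
    exact hx.1.1
  have hBsubΩ : B ⊆ Ω := by
    rintro _ ⟨x, hx, rfl⟩
    exact hx.2.1
  have hAtile : A ⊆ tile T w := by
    rintro _ ⟨x, hx, rfl⟩
    show x + cvec T w - cvec T w ∈ Dfund T
    rw [add_sub_cancel_right]
    exact (hOpsub w hx.1)
  have hBtile : B ⊆ tile T w' := by
    rintro _ ⟨x, hx, rfl⟩
    show x + cvec T w' - cvec T w' ∈ Dfund T
    rw [add_sub_cancel_right]
    exact (hOpsub w' hx.2)
  have hdisj : Disjoint A B := (tile_disjoint T hne).mono hAtile hBtile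
  -- the test function
  set f : EuclideanSpace ℝ (Fin 2) → ℂ :=
    fun x => A.indicator 1 x - B.indicator 1 x with hf
  have hrfinA : (volume.restrict Ω) A ≠ ⊤ := by
    rw [Measure.restrict_apply' hΩmeas]
    exact ne_top_of_le_ne_top hΩfin (measure_mono Set.inter_subset_right)
  have hrfinB : (volume.restrict Ω) B ≠ ⊤ := by
    rw [Measure.restrict_apply' hΩmeas]
    exact ne_top_of_le_ne_top hΩfin (measure_mono Set.inter_subset_right)
  have hf2 : MemLp f 2 (volume.restrict Ω) := by
    have h1 : MemLp (A.indicator (fun _ => (1:ℂ))) 2 (volume.restrict Ω) :=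
      memLp_indicator_const 2 hAmeas 1 (Or.inr hrfinA)
    have h2 : MemLp (B.indicator (fun _ => (1:ℂ))) 2 (volume.restrict Ω) :=
      memLp_indicator_const 2 hBmeas 1 (Or.inr hrfinB)
    exact h1.sub h2
  -- orthogonality to all exponentials
  have hint : ∀ lam ∈ Λ, ∫ x in Ω,
      f x * (starRingEnd ℂ) (Complex.exp (2 * Real.pi * Complex.I * ((⟪x, lam⟫ : ℝ) : ℂ))) = 0 := by
    intro lam hlam
    obtain ⟨v, hv, rfl⟩ := hΛL hlam
    set g : EuclideanSpace ℝ (Fin 2) → ℂ :=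
      fun x => (starRingEnd ℂ) (Complex.exp (2 * Real.pi * Complex.I * ((⟪x, T v⟫ : ℝ) : ℂ))) with hg
    have hgcont : Continuous g := by
      apply Complex.continuous_conj.comp
      apply Complex.continuous_exp.comp
      exact (continuous_const.mul (Complex.continuous_ofReal.comp
        ((continuous_id.inner continuous_const))))
    have hgnorm : ∀ x, ‖g x‖ = 1 := by
      intro x
      rw [hg]
      simp only [RingHomIsometric.norm_map]
      rw [Complex.norm_exp]
      norm_num
    haveI : IsFiniteMeasure (volume.restrict Ω) := by
      constructor
      rw [Measure.restrict_apply_univ]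
      exact hΩfin.lt_top
    have hgint : Integrable g (volume.restrict Ω) := by
      refine Integrable.mono' (integrable_const 1) hgcont.aestronglyMeasurable ?_
      exact Filter.Eventually.of_forall fun x => (hgnorm x).le
    -- key periodicity: g is invariant under translation by lattice-dual vectors
    have hkey : ∀ u : Fin 2 → ℤ, ∀ x, g (x + cvec T u) = g x := by
      intro u x
      choose m hm using hv
      have hinner : ⟪cvec T u, T v⟫ = ((∑ i, m i * u i : ℤ) : ℝ) := by
        rw [real_inner_comm, cvec, Slin_inner]
        rw [PiLp.inner_apply]
        push_cast
        refine Finset.sum_congr rfl fun i _ => ?_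
        rw [RCLike.inner_apply]
        simp [zmap, hm i, starRingEnd_apply, mul_comm]
      set k : ℤ := ∑ i, m i * u i
      have hsplit : ⟪x + cvec T u, T v⟫ = ⟪x, T v⟫ + (k : ℝ) := by
        rw [inner_add_left, hinner]
      rw [hg]
      simp only
      congr 1
      rw [hsplit]
      push_cast
      rw [mul_add, Complex.exp_add]
      have h1 : Complex.exp (2 * Real.pi * Complex.I * (k : ℂ)) = 1 := by
        rw [show (2 * (Real.pi : ℂ) * Complex.I * (k : ℂ)) = (k : ℂ) * (2 * Real.pi * Complex.I)
          by ring]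
        exact Complex.exp_int_mul_two_pi_mul_I k
      rw [h1, mul_one]
    -- compute the integral
    have hptwise : ∀ x, f x * g x = A.indicator g x - B.indicator g x := by
      intro x
      rw [hf]
      simp only [Set.indicator]
      split_ifs <;> simp
    have hintA : Integrable (A.indicator g) (volume.restrict Ω) := hgint.indicator hAmeas
    have hintB : Integrable (B.indicator g) (volume.restrict Ω) := hgint.indicator hBmeas
    calc ∫ x in Ω, f x * g x = ∫ x in Ω, (A.indicator g x - B.indicator g x) := by
          exact integral_congr_ae (Filter.Eventually.of_forall hptwise)
      _ = (∫ x in Ω, A.indicator g x) - ∫ x in Ω, B.indicator g x :=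
          integral_sub hintA hintB
      _ = (∫ x in A, g x) - ∫ x in B, g x := by
          rw [integral_indicator hAmeas, integral_indicator hBmeas,
            Measure.restrict_restrict hAmeas, Measure.restrict_restrict hBmeas,
            Set.inter_eq_self_of_subset_left hAsubΩ, Set.inter_eq_self_of_subset_left hBsubΩ]
      _ = (∫ x in F, g (x + cvec T w)) - ∫ x in F, g (x + cvec T w') := by
          rw [hA, hB,
            (measurePreserving_add_right volume (cvec T w)).setIntegral_image_emb
              (measurableEmbedding_addRight (cvec T w)) g F,
            (measurePreserving_add_right volume (cvec T w')).setIntegral_image_emb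
              (measurableEmbedding_addRight (cvec T w')) g F]
      _ = (∫ x in F, g x) - ∫ x in F, g x := by
          rw [integral_congr_ae (Filter.Eventually.of_forall fun x => hkey w x),
            integral_congr_ae (Filter.Eventually.of_forall fun x => hkey w' x)]
      _ = 0 := sub_self _
  -- completeness gives f = 0 a.e., contradiction
  have hzero := hΛ.2 f hf2 hint
  have hnull : volume.restrict Ω {x | f x ≠ 0} = 0 := by
    have := MeasureTheory.ae_iff.mp hzero
    simpa using this
  have hsubset : A ⊆ {x | f x ≠ 0} := by
    intro x hx
    have hxB : x ∉ B := Set.disjoint_left.mp hdisj hx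
    simp only [Set.mem_setOf_eq, hf, Set.indicator_of_mem hx, Set.indicator_of_notMem hxB]
    norm_num
  have hA0 : volume.restrict Ω A = 0 := measure_mono_null hsubset hnull
  rw [Measure.restrict_apply' hΩmeas, Set.inter_eq_self_of_subset_left hAsubΩ, hAvol] at hA0
  exact hFpos hA0
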